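/- For every f in C_Z([0,1]) and every natural n >= 1, the distance in the sup norm from f to the Bernstein lattice B_n satisfies d_infty(f, B_n) <= (9/4) omega_f(n^{-1/3}) + 2 n^{-1/3}. -/

import Mathlib

open Finset Real Nat


/-- Bernstein basis function. -/
noncomputable def pb (n k : ℕ) (x : ℝ) : ℝ := (n.choose k : ℝ) * x ^ k * (1 - x) ^ (n - k)

lemma pb_nonneg {n k : ℕ} {x : ℝ} (h0 : 0 ≤ x) (h1 : x ≤ 1) : 0 ≤ pb n k x := by
  have : (0:ℝ) ≤ 1 - x := by linarith
  unfold pb; positivity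

lemma pb_sum (n : ℕ) (x : ℝ) : ∑ k ∈ range (n+1), pb n k x = 1 := by
  have h := add_pow x (1-x) n
  simp only [add_sub_cancel, one_pow] at h
  rw [eq_comm] at h
  rw [← h]
  apply Finset.sum_congr rfl
  intro k _
  unfold pb; ring

lemma pb_eq_bernstein (n k : ℕ) (x : unitInterval) : pb n k x = bernstein n k x := by
  rw [bernstein_apply]; rfl

lemma pb_variance {n : ℕ} (hn : 1 ≤ n) {x : ℝ} (hx : x ∈ Set.Icc (0:ℝ) 1) :
    ∑ k ∈ range (n+1), (x - k/n)^2 * pb n k x = x * (1-x) / n := by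
  have hn' : (0:ℝ) < n := by exact_mod_cast hn
  have := bernstein.variance (n := n) (by omega) ⟨x, hx⟩
  rw [Finset.sum_range]
  rw [← this]
  apply Finset.sum_congr rfl
  intro k _
  rw [← pb_eq_bernstein]
  rfl



/-- stirling two-sided bounds -/
lemma stirling_lower {n : ℕ} (hn : 1 ≤ n) : Real.sqrt π ≤ Stirling.stirlingSeq n := by
  obtain ⟨m, rfl⟩ := Nat.exists_eq_add_of_le hn
  have ht : Filter.Tendsto (Stirling.stirlingSeq ∘ Nat.succ) Filter.atTop (nhds (Real.sqrt π)) := by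
    have h1 : Filter.Tendsto (fun n : ℕ => n + 1) Filter.atTop Filter.atTop :=
      Filter.tendsto_add_atTop_nat 1
    exact Stirling.tendsto_stirlingSeq_sqrt_pi.comp h1
  have := Stirling.stirlingSeq'_antitone.le_of_tendsto ht m
  simpa [Nat.add_comm] using this

lemma stirling_upper {n : ℕ} (hn : 1 ≤ n) : Stirling.stirlingSeq n ≤ Real.exp 1 / Real.sqrt 2 := by
  obtain ⟨m, rfl⟩ := Nat.exists_eq_add_of_le hn
  have h := Stirling.stirlingSeq'_antitone (Nat.zero_le m)
  simp only [Function.comp] at h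
  rw [← Stirling.stirlingSeq_one]
  simpa [Nat.add_comm] using h

lemma factorial_eq {n : ℕ} (h : 1 ≤ n) : (n ! : ℝ) = Stirling.stirlingSeq n * (Real.sqrt (2*n) * ((n:ℝ)/Real.exp 1)^n) := by
  have hn : (0:ℝ) < n := by exact_mod_cast h
  rw [Stirling.stirlingSeq]
  have : Real.sqrt (2*n) * ((n:ℝ)/Real.exp 1)^n ≠ 0 := by positivity
  field_simp

/-- the peak value bound via Stirling -/
lemma peak_bound {n k : ℕ} (hk : 0 < k) (hkn : k < n) :
    (n.choose k : ℝ) * ((k:ℝ)/n)^k * (((n-k:ℕ):ℝ)/n)^(n-k) ≤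
      Real.exp 1 / (Real.sqrt 2 * π) * Real.sqrt ((n:ℝ) / (2 * k * (n-k:ℕ))) := by
  have hn : 1 ≤ n := hk.trans hkn
  have hkR : (0:ℝ) < k := by exact_mod_cast hk
  have hnR : (0:ℝ) < n := by exact_mod_cast hn
  have hnkN : 0 < n - k := Nat.sub_pos_of_lt hkn
  have hnkR : (0:ℝ) < ((n-k:ℕ):ℝ) := by exact_mod_cast hnkN
  have hchoose : (n.choose k : ℝ) = (n ! : ℝ) / ((k ! : ℝ) * ((n-k)! : ℝ)) := by
    rw [Nat.cast_choose ℝ (le_of_lt hkn)]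
  have hsn := stirling_upper hn
  have hsk := stirling_lower hk
  have hsnk := stirling_lower hnkN
  have hpi : (0:ℝ) < π := Real.pi_pos
  have hsqpi : (0:ℝ) < Real.sqrt π := Real.sqrt_pos.mpr hpi
  -- expand factorials
  have hkfac := factorial_eq hk
  have hnfac := factorial_eq hn
  have hnkfac := factorial_eq hnkN
  set sn := Stirling.stirlingSeq n
  set sk := Stirling.stirlingSeq k
  set snk := Stirling.stirlingSeq (n-k)
  have hskpos : 0 < sk := lt_of_lt_of_le hsqpi hsk
  have hsnkpos : 0 < snk := lt_of_lt_of_le hsqpi hsnk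
  have hsnpos : 0 < sn := by
    have h0 : 0 < Stirling.stirlingSeq ((n-1)+1) := Stirling.stirlingSeq'_pos (n-1)
    have he : (n-1)+1 = n := by omega
    rw [he] at h0; exact h0
  -- key algebraic identity:
  have key : (n.choose k : ℝ) * ((k:ℝ)/n)^k * (((n-k:ℕ):ℝ)/n)^(n-k)
      = (sn / (sk * snk)) * Real.sqrt ((n:ℝ) / (2 * k * (n-k:ℕ))) := by
    rw [hchoose, hnfac, hkfac, hnkfac]
    have e1 : ((n:ℝ)/Real.exp 1)^n = (n:ℝ)^n / (Real.exp 1)^n := div_pow _ _ _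
    have e2 : ((k:ℝ)/Real.exp 1)^k = (k:ℝ)^k / (Real.exp 1)^k := div_pow _ _ _
    have e3 : (((n-k:ℕ):ℝ)/Real.exp 1)^(n-k) = ((n-k:ℕ):ℝ)^(n-k) / (Real.exp 1)^(n-k) := div_pow _ _ _
    have eexp : (Real.exp 1)^k * (Real.exp 1)^(n-k) = (Real.exp 1)^n := by
      rw [← pow_add]; congr 1; omega
    have hsq : Real.sqrt ((n:ℝ)/(2*k*(n-k:ℕ))) = Real.sqrt (2*(n:ℝ)) / (Real.sqrt (2*(k:ℝ)) * Real.sqrt (2*((n-k:ℕ):ℝ))) := by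
      rw [← Real.sqrt_mul (by positivity), ← Real.sqrt_div (by positivity)]
      congr 1
      field_simp
    rw [hsq]
    have hxk : ((k:ℝ)/n)^k = (k:ℝ)^k / (n:ℝ)^k := div_pow _ _ _
    have hxnk : (((n-k:ℕ):ℝ)/n)^(n-k) = ((n-k:ℕ):ℝ)^(n-k) / (n:ℝ)^(n-k) := div_pow _ _ _
    have hnn : (n:ℝ)^k * (n:ℝ)^(n-k) = (n:ℝ)^n := by
      rw [← pow_add]; congr 1; omega
    rw [e1, e2, e3, hxk, hxnk]
    have h1 : (0:ℝ) < Real.sqrt (2*(k:ℝ)) := by positivity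
    have h2 : (0:ℝ) < Real.sqrt (2*((n-k:ℕ):ℝ)) := by positivity
    have h3 : (0:ℝ) < (k:ℝ)^k := by positivity
    have h4 : (0:ℝ) < ((n-k:ℕ):ℝ)^(n-k) := by positivity
    have h5 : (0:ℝ) < (Real.exp 1)^n := by positivity
    field_simp
    have ecast : Real.exp (k:ℝ) * Real.exp ((n-k:ℕ):ℝ) = Real.exp (n:ℝ) := by
      rw [← Real.exp_add]
      congr 1
      have : ((k:ℝ)) + ((n-k:ℕ):ℝ) = n := by
        have : k + (n - k) = n := by omega
        exact_mod_cast this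
      linarith
    rw [← eexp, ← hnn]
    ring
  rw [key]
  have hsqnn : 0 ≤ Real.sqrt ((n:ℝ) / (2 * k * (n-k:ℕ))) := Real.sqrt_nonneg _
  apply mul_le_mul_of_nonneg_right _ hsqnn
  have h2 : Real.sqrt π * Real.sqrt π = π := Real.mul_self_sqrt (le_of_lt hpi)
  calc sn / (sk * snk) ≤ (Real.exp 1 / Real.sqrt 2) / (Real.sqrt π * Real.sqrt π) := by
        apply div_le_div₀ (by positivity) hsn (by positivity)
        exact mul_le_mul hsk hsnk (le_of_lt hsqpi) (le_of_lt (lt_of_lt_of_le hsqpi hsk))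
    _ = Real.exp 1 / (Real.sqrt 2 * π) := by rw [h2, div_div]



lemma pb_le_peak {n k : ℕ} (hk : 0 < k) (hkn : k < n) {x : ℝ} (hx0 : 0 ≤ x) (hx1 : x ≤ 1) :
    pb n k x ≤ (n.choose k : ℝ) * ((k:ℝ)/n)^k * (((n-k:ℕ):ℝ)/n)^(n-k) := by
  have hnR : (0:ℝ) < n := by exact_mod_cast hk.trans hkn
  have hkR : (0:ℝ) < k := by exact_mod_cast hk
  have hnkR : (0:ℝ) < ((n-k:ℕ):ℝ) := by
    have : 0 < n - k := Nat.sub_pos_of_lt hkn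
    exact_mod_cast this
  have h1x : (0:ℝ) ≤ 1 - x := by linarith
  set A := x * n / k with hA
  set B := (1-x) * n / ((n-k:ℕ):ℝ) with hB
  have hA0 : 0 ≤ A := by positivity
  have hB0 : 0 ≤ B := by positivity
  have hw : (k:ℝ)/n + ((n-k:ℕ):ℝ)/n = 1 := by
    rw [← add_div, div_eq_one_iff_eq (ne_of_gt hnR)]
    have : k + (n - k) = n := by omega
    exact_mod_cast this
  have hgm := Real.geom_mean_le_arith_mean2_weighted
    (by positivity : (0:ℝ) ≤ (k:ℝ)/n) (by positivity : (0:ℝ) ≤ ((n-k:ℕ):ℝ)/n) hA0 hB0 hw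
  have harith : (k:ℝ)/n * A + ((n-k:ℕ):ℝ)/n * B = 1 := by
    rw [hA, hB]; field_simp; ring
  rw [harith] at hgm
  -- raise to the n-th power
  have hpow : A ^ k * B ^ (n-k) ≤ 1 := by
    have hgm' := pow_le_pow_left₀ (by positivity) hgm n
    rw [one_pow, mul_pow] at hgm'
    have e1 : (A ^ ((k:ℝ)/n)) ^ (n:ℕ) = A ^ k := by
      rw [← Real.rpow_natCast (A ^ ((k:ℝ)/n)) n, ← Real.rpow_mul hA0, div_mul_cancel₀ _ (ne_of_gt hnR),
        Real.rpow_natCast]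
    have e2 : (B ^ (((n-k:ℕ):ℝ)/n)) ^ (n:ℕ) = B ^ (n-k) := by
      rw [← Real.rpow_natCast (B ^ (((n-k:ℕ):ℝ)/n)) n, ← Real.rpow_mul hB0, div_mul_cancel₀ _ (ne_of_gt hnR),
        Real.rpow_natCast]
    rw [e1, e2] at hgm'
    exact hgm'
  -- unfold
  have key : x ^ k * (1-x) ^ (n-k) = (A ^ k * B ^ (n-k)) * (((k:ℝ)/n)^k * (((n-k:ℕ):ℝ)/n)^(n-k)) := by
    rw [hA, hB, div_pow, div_pow, div_pow, div_pow, mul_pow, mul_pow]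
    field_simp
  unfold pb
  rw [mul_assoc, mul_assoc, key]
  have hcn : (0:ℝ) ≤ (n.choose k : ℝ) := by positivity
  have hq : (0:ℝ) ≤ ((k:ℝ)/n)^k * (((n-k:ℕ):ℝ)/n)^(n-k) := by positivity
  calc (n.choose k : ℝ) * (A ^ k * B ^ (n-k) * (((k:ℝ)/n)^k * (((n-k:ℕ):ℝ)/n)^(n-k)))
      ≤ (n.choose k : ℝ) * (1 * (((k:ℝ)/n)^k * (((n-k:ℕ):ℝ)/n)^(n-k))) := by
        apply mul_le_mul_of_nonneg_left (mul_le_mul_of_nonneg_right hpow hq) hcn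
    _ = (n.choose k : ℝ) * (((k:ℝ)/n)^k * (((n-k:ℕ):ℝ)/n)^(n-k)) := by ring

lemma middle_bound {n k : ℕ}
    (hk : ((n:ℝ))^((2:ℝ)/3) < k) (hnk : ((n:ℝ))^((2:ℝ)/3) < ((n-k:ℕ):ℝ))
    (hkn : k < n) (hn : 1 ≤ n)
    {x : ℝ} (hx0 : 0 ≤ x) (hx1 : x ≤ 1)
    (peak_bound : (n.choose k : ℝ) * ((k:ℝ)/n)^k * (((n-k:ℕ):ℝ)/n)^(n-k) ≤
      Real.exp 1 / (Real.sqrt 2 * π) * Real.sqrt ((n:ℝ) / (2 * k * (n-k:ℕ)))) :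
    pb n k x ≤ Real.exp 1 / (Real.sqrt 2 * π) * (n:ℝ) ^ (-(1/3) : ℝ) := by
  have hnR : (0:ℝ) < n := by exact_mod_cast hn
  set u := (n:ℝ) ^ ((1:ℝ)/3) with hu
  have hu1 : 1 ≤ u := Real.one_le_rpow (by exact_mod_cast hn) (by norm_num)
  have hu0 : 0 < u := lt_of_lt_of_le one_pos hu1
  have hu3 : u ^ (3:ℕ) = n := by
    rw [hu, ← Real.rpow_natCast ((n:ℝ) ^ ((1:ℝ)/3)) 3, ← Real.rpow_mul (le_of_lt hnR)]
    norm_num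
  have hu2 : u ^ (2:ℕ) = (n:ℝ) ^ ((2:ℝ)/3) := by
    rw [hu, ← Real.rpow_natCast ((n:ℝ) ^ ((1:ℝ)/3)) 2, ← Real.rpow_mul (le_of_lt hnR)]
    norm_num
  have hdelta : (n:ℝ) ^ (-(1/3) : ℝ) = u⁻¹ := by
    rw [hu, ← Real.rpow_neg_one ((n:ℝ) ^ ((1:ℝ)/3)), ← Real.rpow_mul (le_of_lt hnR)]
    norm_num
  have hk0 : 0 < k := by
    by_contra h
    push_neg at h
    interval_cases k
    simp at hk
    nlinarith [Real.rpow_nonneg (le_of_lt hnR) ((2:ℝ)/3)]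
  have hkR : (0:ℝ) < k := by exact_mod_cast hk0
  have hnkR : (0:ℝ) < ((n-k:ℕ):ℝ) := by
    have : 0 < n - k := Nat.sub_pos_of_lt hkn
    exact_mod_cast this
  have hsum : (k:ℝ) + ((n-k:ℕ):ℝ) = n := by
    have : k + (n - k) = n := by omega
    exact_mod_cast this
  -- √(n/(2 k (n-k))) ≤ u⁻¹
  have hsqrt : Real.sqrt ((n:ℝ) / (2 * k * (n-k:ℕ))) ≤ u⁻¹ := by
    have h2 : (n:ℝ) / (2 * k * (n-k:ℕ)) ≤ (u⁻¹) ^ (2:ℕ) := by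
      rw [div_le_iff₀ (by positivity)]
      have hmax : (n:ℝ)/2 ≤ (k:ℝ) ∨ (n:ℝ)/2 ≤ ((n-k:ℕ):ℝ) := by
        by_contra h
        push_neg at h
        obtain ⟨h1, h2⟩ := h
        linarith
      have hck : u^(2:ℕ) < (k:ℝ) := by rw [hu2]; exact hk
      have hcnk : u^(2:ℕ) < ((n-k:ℕ):ℝ) := by rw [hu2]; exact hnk
      have h5 : u^(5:ℕ) ≤ 2 * (k:ℝ) * ((n-k:ℕ):ℝ) := by
        rcases hmax with h | h
        · nlinarith [pow_pos hu0 2, pow_pos hu0 3]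
        · nlinarith [pow_pos hu0 2, pow_pos hu0 3]
      have : (u⁻¹)^(2:ℕ) * u^(5:ℕ) = u^(3:ℕ) := by
        field_simp
      nlinarith [pow_pos hu0 5, pow_nonneg (le_of_lt hu0) 2, inv_pos.mpr hu0, pow_pos (inv_pos.mpr hu0) 2]
    calc Real.sqrt ((n:ℝ) / (2 * k * (n-k:ℕ))) ≤ Real.sqrt ((u⁻¹)^(2:ℕ)) := Real.sqrt_le_sqrt h2
      _ = u⁻¹ := by rw [Real.sqrt_sq (by positivity)]
  have h1 := pb_le_peak hk0 hkn hx0 hx1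
  have hC : (0:ℝ) < Real.exp 1 / (Real.sqrt 2 * π) := by positivity
  calc pb n k x ≤ (n.choose k : ℝ) * ((k:ℝ)/n)^k * (((n-k:ℕ):ℝ)/n)^(n-k) := h1
    _ ≤ Real.exp 1 / (Real.sqrt 2 * π) * Real.sqrt ((n:ℝ) / (2 * k * (n-k:ℕ))) := peak_bound
    _ ≤ Real.exp 1 / (Real.sqrt 2 * π) * u⁻¹ := by
        exact mul_le_mul_of_nonneg_left hsqrt (le_of_lt hC)
    _ = Real.exp 1 / (Real.sqrt 2 * π) * (n:ℝ) ^ (-(1/3) : ℝ) := by rw [hdelta]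





lemma pb_ratio {n k : ℕ} (hkn : k < n) (x : ℝ) :
    pb n (k+1) x * ((k+1) * (1-x)) = pb n k x * (((n-k:ℕ):ℝ) * x) := by
  unfold pb
  have hc : ((n.choose (k+1)) : ℝ) * ((k:ℝ)+1) = (n.choose k : ℝ) * ((n-k:ℕ):ℝ) := by
    exact_mod_cast congrArg (Nat.cast (R := ℝ)) (Nat.choose_succ_right_eq n k)
  have hsub : n - k = (n - (k+1)) + 1 := by omega
  have hcast : ((n-k:ℕ):ℝ) = ((n-(k+1):ℕ):ℝ) + 1 := by exact_mod_cast hsub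
  rw [hcast] at hc
  rw [hsub, pow_succ]
  push_cast
  linear_combination (x^k * x * (1-x)^(n-(k+1)) * (1-x)) * hc

lemma pb_descent {n : ℕ} {x : ℝ} (hx0 : 0 ≤ x) (hx1 : x ≤ 1) {j k : ℕ}
    (hjk : j ≤ k) (hkn : k < n) (hd : pb n (j+1) x < pb n j x) :
    pb n (k+1) x ≤ pb n k x := by
  have hjn : j < n := lt_of_le_of_lt hjk hkn
  have hpbj : 0 < pb n j x := lt_of_le_of_lt (pb_nonneg hx0 hx1) hd
  have hx1' : x < 1 := by
    rcases lt_or_eq_of_le hx1 with h | h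
    · exact h
    · exfalso
      subst h
      have : pb n j 1 = 0 := by
        unfold pb
        have : n - j ≠ 0 := by omega
        simp [this, zero_pow]
      rw [this] at hpbj
      exact lt_irrefl 0 hpbj
  have h1xpos : 0 < 1 - x := by linarith
  have hj := pb_ratio hjn x
  have hk := pb_ratio hkn x
  -- (n-j) x < (j+1)(1-x)
  have hstep : ((n-j:ℕ):ℝ) * x < ((j:ℝ)+1) * (1-x) := by
    have hmul : pb n (j+1) x * (((j:ℝ)+1) * (1-x)) < pb n j x * (((j:ℝ)+1) * (1-x)) := by
      apply mul_lt_mul_of_pos_right hd (by positivity)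
    rw [hj] at hmul
    have := (mul_lt_mul_iff_right₀ hpbj).mp hmul
    exact this
  have hmono : ((n-k:ℕ):ℝ) * x ≤ ((k:ℝ)+1) * (1-x) := by
    have h1 : ((n-k:ℕ):ℝ) ≤ ((n-j:ℕ):ℝ) := by
      have : n - k ≤ n - j := by omega
      exact_mod_cast this
    have h2 : ((j:ℝ)+1) ≤ ((k:ℝ)+1) := by
      have : (j:ℝ) ≤ k := by exact_mod_cast hjk
      linarith
    calc ((n-k:ℕ):ℝ) * x ≤ ((n-j:ℕ):ℝ) * x := mul_le_mul_of_nonneg_right h1 hx0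
      _ ≤ ((j:ℝ)+1) * (1-x) := le_of_lt hstep
      _ ≤ ((k:ℝ)+1) * (1-x) := mul_le_mul_of_nonneg_right h2 (le_of_lt h1xpos)
  have hfin : pb n (k+1) x * (((k:ℝ)+1) * (1-x)) ≤ pb n k x * (((k:ℝ)+1) * (1-x)) := by
    rw [hk]
    exact mul_le_mul_of_nonneg_left hmono (pb_nonneg hx0 hx1)
  exact le_of_mul_le_mul_right hfin (by positivity)

lemma sum_Ico_telescope (h : ℕ → ℝ) (a : ℕ) :
    ∀ b, a ≤ b → ∑ k ∈ Ico a b, (h (k+1) - h k) = h b - h a := by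
  intro b
  induction b with
  | zero => intro hb; interval_cases a; simp
  | succ b ih =>
    intro hb
    rcases Nat.lt_or_ge a (b+1) with h1 | h1
    · have hab : a ≤ b := by omega
      rw [Finset.sum_Ico_succ_top hab, ih hab]
      ring
    · have : a = b + 1 := by omega
      subst this
      simp

lemma tv_bound (g : ℕ → ℝ) (c d : ℕ) (hcd : c ≤ d) (M : ℝ)
    (h0 : ∀ k, c ≤ k → k ≤ d → 0 ≤ g k) (hM : ∀ k, c ≤ k → k ≤ d → g k ≤ M)
    (hper : ∀ j k, c ≤ j → j ≤ k → k < d → g (j+1) < g j → g (k+1) ≤ g k) :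
    ∑ k ∈ Ico c d, |g (k+1) - g k| ≤ 2 * M := by
  have hM0 : 0 ≤ M := le_trans (h0 c le_rfl hcd) (hM c le_rfl hcd)
  set D := (Ico c d).filter (fun k => g (k+1) < g k) with hD
  rcases eq_or_ne D ∅ with hDe | hDne
  · have : ∀ k ∈ Ico c d, |g (k+1) - g k| = g (k+1) - g k := by
      intro k hk
      rw [abs_of_nonneg]
      have : ¬ (g (k+1) < g k) := by
        intro hlt
        have : k ∈ D := Finset.mem_filter.mpr ⟨hk, hlt⟩
        rw [hDe] at this
        exact absurd this (Finset.notMem_empty k)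
      linarith [not_lt.mp this]
    rw [Finset.sum_congr rfl this, sum_Ico_telescope g c d hcd]
    have h1 := h0 c le_rfl hcd
    have h2 := hM d hcd le_rfl
    linarith
  · have hne : D.Nonempty := Finset.nonempty_iff_ne_empty.mpr hDne
    set t := D.min' hne with ht
    have htD : t ∈ D := D.min'_mem hne
    have htIco : t ∈ Ico c d := (Finset.mem_filter.mp htD).1
    have htdesc : g (t+1) < g t := (Finset.mem_filter.mp htD).2
    have hct : c ≤ t := (Finset.mem_Ico.mp htIco).1
    have htd : t < d := (Finset.mem_Ico.mp htIco).2
    rw [← Finset.sum_Ico_consecutive _ hct (le_of_lt htd)]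
    have e1 : ∑ k ∈ Ico c t, |g (k+1) - g k| = g t - g c := by
      have : ∀ k ∈ Ico c t, |g (k+1) - g k| = g (k+1) - g k := by
        intro k hk
        obtain ⟨hck, hkt⟩ := Finset.mem_Ico.mp hk
        rw [abs_of_nonneg]
        have hnd : ¬ (g (k+1) < g k) := by
          intro hlt
          have hkD : k ∈ D := Finset.mem_filter.mpr ⟨Finset.mem_Ico.mpr ⟨hck, lt_trans hkt htd⟩, hlt⟩
          have := D.min'_le k hkD
          omega
        linarith [not_lt.mp hnd]
      rw [Finset.sum_congr rfl this, sum_Ico_telescope g c t hct]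
    have e2 : ∑ k ∈ Ico t d, |g (k+1) - g k| = g t - g d := by
      have : ∀ k ∈ Ico t d, |g (k+1) - g k| = -(g (k+1) - g k) := by
        intro k hk
        obtain ⟨htk, hkd⟩ := Finset.mem_Ico.mp hk
        rw [abs_of_nonpos]
        have := hper t k hct htk hkd htdesc
        linarith
      have e2' := sum_Ico_telescope (fun k => -(g k)) t d (le_of_lt htd)
      calc ∑ k ∈ Ico t d, |g (k+1) - g k| = ∑ k ∈ Ico t d, (-(g (k+1)) - -(g k)) := by
            apply Finset.sum_congr rfl; intro k hk; rw [this k hk]; ring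
        _ = -(g d) - -(g t) := e2'
        _ = g t - g d := by ring
    rw [e1, e2]
    have h1 := h0 c le_rfl hcd
    have h2 := h0 d hcd le_rfl
    have h3 := hM t hct (le_of_lt htd)
    linarith

lemma abel_identity (S g : ℕ → ℝ) (a : ℕ) (hS : S a = 0) :
    ∀ b, a ≤ b → ∑ k ∈ Ico (a+1) (b+1), (S k - S (k-1)) * g k
      = S b * g b + ∑ k ∈ Ico (a+1) b, S k * (g k - g (k+1)) := by
  intro b hb
  induction b, hb using Nat.le_induction with
  | base => simp [hS]
  | succ b hb ih =>
    rw [Finset.sum_Ico_succ_top (by omega : a + 1 ≤ b + 1)]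
    rw [ih]
    rcases eq_or_lt_of_le hb with h | h
    · subst h
      simp [hS]
    · rw [Finset.sum_Ico_succ_top (by omega : a + 1 ≤ b) (f := fun k => S k * (g k - g (k+1)))]
      simp only [Nat.add_sub_cancel]
      ring

/-- Modulus of continuity of `f` on `[0,1]`. -/
noncomputable def modCont (f : ℝ → ℝ) (δ : ℝ) : ℝ :=
  sSup {d : ℝ | ∃ x ∈ Set.Icc (0:ℝ) 1, ∃ y ∈ Set.Icc (0:ℝ) 1,
    |x - y| ≤ δ ∧ d = |f x - f y|}

lemma modCont_bddAbove (f : ℝ → ℝ) (hf : ContinuousOn f (Set.Icc (0:ℝ) 1)) (δ : ℝ) :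
    BddAbove {d : ℝ | ∃ x ∈ Set.Icc (0:ℝ) 1, ∃ y ∈ Set.Icc (0:ℝ) 1,
      |x - y| ≤ δ ∧ d = |f x - f y|} := by
  obtain ⟨C, hC⟩ := isCompact_Icc.exists_bound_of_continuousOn hf
  refine ⟨2 * C, ?_⟩
  rintro d ⟨x, hx, y, hy, -, rfl⟩
  have h1 := hC x hx
  have h2 := hC y hy
  rw [Real.norm_eq_abs] at h1 h2
  calc |f x - f y| ≤ |f x| + |f y| := abs_sub _ _
    _ ≤ 2 * C := by linarith

lemma abs_sub_le_modCont (f : ℝ → ℝ) (hf : ContinuousOn f (Set.Icc (0:ℝ) 1)) {δ x y : ℝ}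
    (hx : x ∈ Set.Icc (0:ℝ) 1) (hy : y ∈ Set.Icc (0:ℝ) 1) (hxy : |x - y| ≤ δ) :
    |f x - f y| ≤ modCont f δ :=
  le_csSup (modCont_bddAbove f hf δ) ⟨x, hx, y, hy, hxy, rfl⟩

lemma modCont_nonneg (f : ℝ → ℝ) (hf : ContinuousOn f (Set.Icc (0:ℝ) 1)) {δ : ℝ} (hδ : 0 ≤ δ) :
    0 ≤ modCont f δ := by
  have h := abs_sub_le_modCont f hf (Set.mem_Icc.mpr ⟨le_refl 0, zero_le_one⟩)
    (Set.mem_Icc.mpr ⟨le_refl 0, zero_le_one⟩) (by simpa using hδ)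
  calc (0:ℝ) ≤ |f 0 - f 0| := abs_nonneg _
    _ ≤ modCont f δ := h

lemma modCont_chain (f : ℝ → ℝ) (hf : ContinuousOn f (Set.Icc (0:ℝ) 1)) {δ x y : ℝ}
    (hδ : 0 < δ) (hx : x ∈ Set.Icc (0:ℝ) 1) (hy : y ∈ Set.Icc (0:ℝ) 1) :
    |f x - f y| ≤ (1 + (x - y)^2 / δ^2) * modCont f δ := by
  have hω := modCont_nonneg f hf (le_of_lt hδ)
  set ω := modCont f δ with hωdef
  set r := |x - y| / δ with hr
  have hr0 : 0 ≤ r := by positivity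
  set m : ℕ := max 1 ⌈r⌉₊ with hm
  have hm1 : 1 ≤ m := le_max_left _ _
  have hmR : (0:ℝ) < m := by exact_mod_cast hm1
  have hrm : r ≤ m := by
    calc r ≤ (⌈r⌉₊ : ℝ) := Nat.le_ceil r
      _ ≤ m := by exact_mod_cast le_max_right 1 ⌈r⌉₊
  set t : ℕ → ℝ := fun i => x + (i:ℝ)/m * (y - x) with ht
  have ht0 : t 0 = x := by simp [ht]
  have htm : t m = y := by
    simp only [ht]
    rw [div_self (ne_of_gt hmR)]
    ring
  have htmem : ∀ i, i ≤ m → t i ∈ Set.Icc (0:ℝ) 1 := by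
    intro i hi
    obtain ⟨hx0, hx1⟩ := Set.mem_Icc.mp hx
    obtain ⟨hy0, hy1⟩ := Set.mem_Icc.mp hy
    have hs0 : 0 ≤ (i:ℝ)/m := by positivity
    have hs1 : (i:ℝ)/m ≤ 1 := by
      rw [div_le_one hmR]
      exact_mod_cast hi
    constructor
    · simp only [ht]; nlinarith
    · simp only [ht]; nlinarith
  have hstep : ∀ i, |t (i+1) - t i| ≤ δ := by
    intro i
    have : t (i+1) - t i = (y - x)/m := by
      simp only [ht]
      push_cast
      field_simp
      ring
    rw [this, abs_div, abs_of_pos hmR, div_le_iff₀ hmR, abs_sub_comm]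
    calc |x - y| = r * δ := by rw [hr]; field_simp
      _ ≤ (m:ℝ) * δ := by nlinarith
      _ = δ * m := by ring
  have htel : f x - f y = ∑ i ∈ range m, (f (t i) - f (t (i+1))) := by
    rw [Finset.sum_range_sub' (fun i => f (t i)) m, ht0, htm]
  have hbound : |f x - f y| ≤ (m:ℝ) * ω := by
    rw [htel]
    calc |∑ i ∈ range m, (f (t i) - f (t (i+1)))| ≤ ∑ i ∈ range m, |f (t i) - f (t (i+1))| :=
          Finset.abs_sum_le_sum_abs _ _
      _ ≤ ∑ _i ∈ range m, ω := by
          apply Finset.sum_le_sum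
          intro i hi
          have hi' : i < m := Finset.mem_range.mp hi
          exact abs_sub_le_modCont f hf (htmem i (le_of_lt hi')) (htmem (i+1) hi') (by rw [abs_sub_comm]; exact hstep i)
      _ = (m:ℝ) * ω := by rw [Finset.sum_const, Finset.card_range]; simp [nsmul_eq_mul]
  have hr2 : r^2 = (x - y)^2 / δ^2 := by
    rw [hr, div_pow, sq_abs]
  have hmle : (m:ℝ) ≤ 1 + (x - y)^2/δ^2 := by
    rw [← hr2]
    rcases le_or_gt r 1 with h | h
    · have : ⌈r⌉₊ ≤ 1 := Nat.ceil_le.mpr (by simpa using h)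
      have : m = 1 := by omega
      rw [this]
      have : 0 ≤ r^2 := sq_nonneg r
      push_cast
      linarith
    · have hceil : m = ⌈r⌉₊ := by
        have : 1 ≤ ⌈r⌉₊ := by
          rw [Nat.one_le_ceil_iff]
          linarith
        omega
      have h1 : (m:ℝ) < r + 1 := by
        rw [hceil]
        exact Nat.ceil_lt_add_one hr0
      nlinarith
  calc |f x - f y| ≤ (m:ℝ) * ω := hbound
    _ ≤ (1 + (x - y)^2/δ^2) * ω := mul_le_mul_of_nonneg_right hmle hω

/-- greedy rounding scheme: (coefficient, running error sum) -/
noncomputable def QS (F : ℕ → ℝ) (a b : ℤ) (m n : ℕ) : ℕ → ℤ × ℝ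
  | 0 => (a, 0)
  | (k+1) =>
    if k + 1 ≤ m then (a, 0)
    else if n - m ≤ k + 1 then (b, (QS F a b m n k).2)
    else (round ((QS F a b m n k).2 + F (k+1)),
          (QS F a b m n k).2 + F (k+1) - round ((QS F a b m n k).2 + F (k+1)))

lemma QS_edge0 (F : ℕ → ℝ) (a b : ℤ) (m n : ℕ) {k : ℕ} (hk : k ≤ m) :
    QS F a b m n k = (a, 0) := by
  cases k with
  | zero => rfl
  | succ j => rw [QS, if_pos hk]

lemma QS_edge1 (F : ℕ → ℝ) (a b : ℤ) (m n : ℕ) {k : ℕ} (hk1 : m < k) (hk2 : n - m ≤ k) :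
    (QS F a b m n k).1 = b := by
  cases k with
  | zero => omega
  | succ j => rw [QS, if_neg (by omega), if_pos hk2]

lemma QS_S_bound (F : ℕ → ℝ) (a b : ℤ) (m n : ℕ) (k : ℕ) :
    |(QS F a b m n k).2| ≤ 1/2 := by
  induction k with
  | zero => norm_num [QS]
  | succ j ih =>
    rw [QS]
    split
    · norm_num
    · split
      · exact ih
      · exact abs_sub_round _

lemma QS_mid (F : ℕ → ℝ) (a b : ℤ) (m n : ℕ) {k : ℕ} (hk1 : m < k) (hk2 : k < n - m) :
    F k - ((QS F a b m n k).1 : ℝ) = (QS F a b m n k).2 - (QS F a b m n (k-1)).2 := by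
  cases k with
  | zero => omega
  | succ j =>
    rw [QS, if_neg (by omega), if_neg (by omega)]
    simp only [Nat.add_sub_cancel]
    ring
/-- Sup-distance of `f` to the Bernstein lattice of order `n`. -/
noncomputable def distBernLattice (f : ℝ → ℝ) (n : ℕ) : ℝ :=
  sInf {e : ℝ | ∃ q : ℕ → ℤ, ∀ x ∈ Set.Icc (0:ℝ) 1,
    |f x - ∑ k ∈ Finset.range (n + 1),
        (q k : ℝ) * ((n.choose k : ℝ) * x ^ k * (1 - x) ^ (n - k))| ≤ e}

set_option maxHeartbeats 2000000 in
theorem main_theorem (f : ℝ → ℝ) (hf : ContinuousOn f (Set.Icc (0:ℝ) 1))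
    (hf0 : ∃ a : ℤ, f 0 = (a : ℝ)) (hf1 : ∃ b : ℤ, f 1 = (b : ℝ))
    (n : ℕ) (hn : 1 ≤ n) :
    distBernLattice f n
      ≤ 9 / 4 * modCont f ((n : ℝ) ^ (-(1/3 : ℝ))) + 2 * (n : ℝ) ^ (-(1/3 : ℝ)) := by
  obtain ⟨a, ha⟩ := hf0
  obtain ⟨b, hb⟩ := hf1
  have hnR : (0:ℝ) < n := by exact_mod_cast hn
  set δ : ℝ := (n : ℝ) ^ (-(1/3 : ℝ)) with hδdef
  set u : ℝ := (n:ℝ) ^ ((1:ℝ)/3) with hu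
  have hu1 : 1 ≤ u := Real.one_le_rpow (by exact_mod_cast hn) (by norm_num)
  have hu0 : 0 < u := lt_of_lt_of_le one_pos hu1
  have hu3 : u ^ (3:ℕ) = n := by
    rw [hu, ← Real.rpow_natCast ((n:ℝ) ^ ((1:ℝ)/3)) 3, ← Real.rpow_mul (le_of_lt hnR)]
    norm_num
  have hu2 : u ^ (2:ℕ) = (n:ℝ) ^ ((2:ℝ)/3) := by
    rw [hu, ← Real.rpow_natCast ((n:ℝ) ^ ((1:ℝ)/3)) 2, ← Real.rpow_mul (le_of_lt hnR)]
    norm_num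
  have hδu : δ = u⁻¹ := by
    rw [hδdef, hu, ← Real.rpow_neg_one ((n:ℝ) ^ ((1:ℝ)/3)), ← Real.rpow_mul (le_of_lt hnR)]
    norm_num
  have hδ0 : 0 < δ := by rw [hδu]; positivity
  have hδ1 : δ ≤ 1 := by rw [hδu]; exact inv_le_one_of_one_le₀ hu1
  set ω : ℝ := modCont f δ with hωdef
  have hω0 : 0 ≤ ω := modCont_nonneg f hf (le_of_lt hδ0)
  set m : ℕ := ⌊(n:ℝ)^((2:ℝ)/3)⌋₊ with hm
  have hm_le : (m:ℝ) ≤ u^(2:ℕ) := by rw [hu2]; exact Nat.floor_le (by positivity)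
  have hm_gt : u^(2:ℕ) < (m:ℝ) + 1 := by rw [hu2]; exact Nat.lt_floor_add_one _
  have hm1 : 1 ≤ m := by
    rw [hm, Nat.le_floor_iff (by positivity), ← hu2]
    push_cast
    nlinarith
  have hδn : δ * n = u^(2:ℕ) := by
    rw [hδu, ← hu3]
    field_simp
  have hmn : (m:ℝ)/n ≤ δ := by
    rw [div_le_iff₀ hnR]
    nlinarith
  have hkmem : ∀ k : ℕ, k ≤ n → ((k:ℝ)/n) ∈ Set.Icc (0:ℝ) 1 := by
    intro k hk
    constructor
    · positivity
    · rw [div_le_one hnR]; exact_mod_cast hk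
  set C : ℝ := Real.exp 1 / (Real.sqrt 2 * π) with hC
  have hC0 : 0 < C := by rw [hC]; positivity
  have hsqrt2 : (1.414:ℝ) ≤ Real.sqrt 2 := by
    nlinarith [Real.sq_sqrt (by norm_num : (0:ℝ) ≤ 2), Real.sqrt_nonneg 2]
  have hCnum : (3/2) * C ≤ 2 := by
    have h1 : C ≤ 4/3 := by
      rw [hC, div_le_iff₀ (by positivity)]
      nlinarith [Real.exp_one_lt_d9, Real.pi_gt_d6, Real.sqrt_nonneg 2, Real.pi_pos]
    linarith
  set F : ℕ → ℝ := fun k => f ((k:ℝ)/n) with hF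
  set q : ℕ → ℤ := fun k => (QS F a b m n k).1 with hq
  set S : ℕ → ℝ := fun k => (QS F a b m n k).2 with hS
  have hSb : ∀ k, |S k| ≤ 1/2 := fun k => QS_S_bound F a b m n k
  -- main pointwise estimate
  have main : ∀ x ∈ Set.Icc (0:ℝ) 1,
      |f x - ∑ k ∈ Finset.range (n+1), (q k : ℝ) * pb n k x| ≤ 9/4 * ω + 2 * δ := by
    intro x hxmem
    obtain ⟨hx0, hx1⟩ := hxmem
    have hpb1 : ∑ k ∈ Finset.range (n+1), pb n k x = 1 := pb_sum n x
    have hpbnn : ∀ k : ℕ, 0 ≤ pb n k x := fun k => pb_nonneg hx0 hx1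
    set mid : Finset ℕ := Finset.Ico (m+1) (n-m) with hmid
    have hmid_sub : mid ⊆ Finset.range (n+1) := by
      intro k hk
      rw [hmid, Finset.mem_Ico] at hk
      rw [Finset.mem_range]
      omega
    -- decomposition
    have hsplit : f x - ∑ k ∈ Finset.range (n+1), (q k : ℝ) * pb n k x
        = (∑ k ∈ Finset.range (n+1), (f x - F k) * pb n k x)
          + ((∑ k ∈ Finset.range (n+1) \ mid, (F k - (q k:ℝ)) * pb n k x)
             + (∑ k ∈ mid, (F k - (q k:ℝ)) * pb n k x)) := by
      rw [Finset.sum_sdiff hmid_sub, ← Finset.sum_add_distrib]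
      have e1 : ∀ k ∈ Finset.range (n+1), (f x - F k) * pb n k x + (F k - (q k:ℝ)) * pb n k x
          = f x * pb n k x - (q k:ℝ) * pb n k x := by intro k _; ring
      rw [Finset.sum_congr rfl e1, Finset.sum_sub_distrib, ← Finset.mul_sum, hpb1, mul_one]
    -- T1 : Bernstein approximation error
    have hT1 : |∑ k ∈ Finset.range (n+1), (f x - F k) * pb n k x| ≤ 5/4 * ω := by
      have step1 : ∀ k ∈ Finset.range (n+1), |(f x - F k) * pb n k x|
          ≤ (ω * pb n k x + (ω/δ^2) * ((x - (k:ℝ)/n)^2 * pb n k x)) := by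
        intro k hk
        rw [Finset.mem_range] at hk
        rw [abs_mul, abs_of_nonneg (hpbnn k)]
        have hchain : |f x - F k| ≤ (1 + (x - (k:ℝ)/n)^2/δ^2) * ω := by
          simp only [hF]
          exact modCont_chain f hf hδ0 ⟨hx0, hx1⟩ (hkmem k (by omega))
        have := mul_le_mul_of_nonneg_right hchain (hpbnn k)
        calc |f x - F k| * pb n k x ≤ ((1 + (x - (k:ℝ)/n)^2/δ^2) * ω) * pb n k x := this
          _ = ω * pb n k x + (ω/δ^2) * ((x - (k:ℝ)/n)^2 * pb n k x) := by ring
      have hvar : ∑ k ∈ Finset.range (n+1), (x - (k:ℝ)/n)^2 * pb n k x = x*(1-x)/n :=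
        pb_variance hn ⟨hx0, hx1⟩
      calc |∑ k ∈ Finset.range (n+1), (f x - F k) * pb n k x|
          ≤ ∑ k ∈ Finset.range (n+1), |(f x - F k) * pb n k x| := Finset.abs_sum_le_sum_abs _ _
        _ ≤ ∑ k ∈ Finset.range (n+1),
              (ω * pb n k x + (ω/δ^2) * ((x - (k:ℝ)/n)^2 * pb n k x)) := Finset.sum_le_sum step1
        _ = ω * (∑ k ∈ Finset.range (n+1), pb n k x)
            + (ω/δ^2) * (∑ k ∈ Finset.range (n+1), (x - (k:ℝ)/n)^2 * pb n k x) := by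
            rw [Finset.sum_add_distrib, ← Finset.mul_sum, ← Finset.mul_sum]
        _ = ω + (ω/δ^2) * (x*(1-x)/n) := by rw [hpb1, hvar, mul_one]
        _ ≤ ω + (ω/δ^2) * (1/(4*n)) := by
            have hx14 : x*(1-x) ≤ 1/4 := by nlinarith [sq_nonneg (x - 1/2)]
            have h1 : x*(1-x)/n ≤ 1/(4*n) := by
              rw [div_le_div_iff₀ hnR (by positivity)]
              nlinarith
            have h2 : (0:ℝ) ≤ ω/δ^2 := by positivity
            nlinarith
        _ = ω + ω * (δ/4) := by
            have : (1:ℝ)/δ^2 * (1/(4*n)) = δ/4 := by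
              rw [hδu, ← hu3]
              field_simp
            calc ω + (ω/δ^2) * (1/(4*n)) = ω + ω * ((1:ℝ)/δ^2 * (1/(4*n))) := by ring
              _ = ω + ω * (δ/4) := by rw [this]
        _ ≤ 5/4 * ω := by nlinarith [mul_le_mul_of_nonneg_left hδ1 hω0]
    -- T2 edge
    have hT2e : |∑ k ∈ Finset.range (n+1) \ mid, (F k - (q k:ℝ)) * pb n k x| ≤ ω := by
      have hedge : ∀ k ∈ Finset.range (n+1) \ mid, |F k - (q k:ℝ)| ≤ ω := by
        intro k hk
        rw [Finset.mem_sdiff, Finset.mem_range, hmid, Finset.mem_Ico] at hk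
        obtain ⟨hkn', hknot⟩ := hk
        have hkn'' : k ≤ n := by omega
        rcases le_or_gt k m with hkm | hkm
        · -- left edge : q k = a
          have hqa : (q k : ℝ) = (a:ℝ) := by
            simp only [hq, QS_edge0 F a b m n hkm]
          rw [hqa, ← ha]
          simp only [hF]
          apply abs_sub_le_modCont f hf (hkmem k hkn'')
            (Set.mem_Icc.mpr ⟨le_refl 0, zero_le_one⟩)
          rw [sub_zero, abs_of_nonneg (by positivity)]
          have hkm' : (k:ℝ) ≤ (m:ℝ) := by exact_mod_cast hkm
          have h1 : (k:ℝ)/n ≤ (m:ℝ)/n := by gcongr <;> exact_mod_cast hkm'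
          exact h1.trans hmn
        · -- right edge : q k = b
          have hknm : n - m ≤ k := by omega
          have hqb : (q k : ℝ) = (b:ℝ) := by
            simp only [hq, QS_edge1 F a b m n hkm hknm]
          rw [hqb, ← hb]
          simp only [hF]
          apply abs_sub_le_modCont f hf (hkmem k hkn'')
            (Set.mem_Icc.mpr ⟨zero_le_one, le_refl 1⟩)
          have hcast : (k:ℝ)/n - 1 = -(((n-k:ℕ):ℝ)/n) := by
            rw [Nat.cast_sub hkn'']
            field_simp
            ring
          rw [hcast, abs_neg, abs_of_nonneg (by positivity)]
          have hnk_le : ((n-k:ℕ):ℝ) ≤ (m:ℝ) := by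
            have : n - k ≤ m := by omega
            exact_mod_cast this
          have h1 : ((n-k:ℕ):ℝ)/n ≤ (m:ℝ)/n := by gcongr <;> exact_mod_cast hnk_le
          exact h1.trans hmn
      calc |∑ k ∈ Finset.range (n+1) \ mid, (F k - (q k:ℝ)) * pb n k x|
          ≤ ∑ k ∈ Finset.range (n+1) \ mid, |(F k - (q k:ℝ)) * pb n k x| :=
            Finset.abs_sum_le_sum_abs _ _
        _ ≤ ∑ k ∈ Finset.range (n+1) \ mid, ω * pb n k x := by
            apply Finset.sum_le_sum
            intro k hk
            rw [abs_mul, abs_of_nonneg (hpbnn k)]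
            exact mul_le_mul_of_nonneg_right (hedge k hk) (hpbnn k)
        _ ≤ ∑ k ∈ Finset.range (n+1), ω * pb n k x := by
            apply Finset.sum_le_sum_of_subset_of_nonneg (Finset.sdiff_subset)
            intro k _ _
            exact mul_nonneg hω0 (hpbnn k)
        _ = ω := by rw [← Finset.mul_sum, hpb1, mul_one]
    -- T2 middle
    have hT2m : |∑ k ∈ mid, (F k - (q k:ℝ)) * pb n k x| ≤ 2 * δ := by
      rcases le_or_gt (n-m) (m+1) with hempty | hne
      · have : mid = ∅ := by rw [hmid]; exact Finset.Ico_eq_empty (by omega)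
        rw [this]
        simp only [Finset.sum_empty, abs_zero]
        positivity
      · set d : ℕ := n - m - 1 with hd
        have hd1 : d + 1 = n - m := by omega
        have hmd : m ≤ d := by omega
        have hm1d : m + 1 ≤ d := by omega
        have hdn : d < n := by omega
        have hSm : S m = 0 := by
          simp only [hS, QS_edge0 F a b m n (le_refl m)]
        have habel := abel_identity S (fun k => pb n k x) m hSm d hmd
        rw [hd1] at habel
        have hterm : ∀ k ∈ mid, (F k - (q k:ℝ)) * pb n k x = (S k - S (k-1)) * pb n k x := by
          intro k hk
          rw [hmid, Finset.mem_Ico] at hk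
          have := QS_mid F a b m n (by omega : m < k) (by omega : k < n - m)
          simp only [hq, hS]
          rw [this]
        -- middle bound on pb
        have hMmid : ∀ k, m+1 ≤ k → k ≤ d → pb n k x ≤ C * δ := by
          intro k h1 h2
          have hk0 : 0 < k := by omega
          have hkltn : k < n := by omega
          have hkgt : ((n:ℝ))^((2:ℝ)/3) < (k:ℝ) := by
            rw [← hu2]
            have : ((m:ℝ)+1) ≤ (k:ℝ) := by exact_mod_cast h1
            linarith
          have hnkgt : ((n:ℝ))^((2:ℝ)/3) < ((n-k:ℕ):ℝ) := by
            rw [← hu2]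
            have hnk : m + 1 ≤ n - k := by omega
            have : ((m:ℝ)+1) ≤ ((n-k:ℕ):ℝ) := by exact_mod_cast hnk
            linarith
          have := middle_bound hkgt hnkgt hkltn hn hx0 hx1 (peak_bound hk0 hkltn)
          rw [← hδdef, ← hC] at this
          exact this
        have hper : ∀ j k, m+1 ≤ j → j ≤ k → k < d →
            pb n (j+1) x < pb n j x → pb n (k+1) x ≤ pb n k x := by
          intro j k _ hjk hkd hdes
          exact pb_descent hx0 hx1 hjk (by omega) hdes
        have hTV := tv_bound (fun k => pb n k x) (m+1) d hm1d (C*δ)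
          (fun k _ _ => hpbnn k) (fun k h1 h2 => hMmid k h1 h2) hper
        have hgd : pb n d x ≤ C * δ := hMmid d hm1d le_rfl
        calc |∑ k ∈ mid, (F k - (q k:ℝ)) * pb n k x|
            = |S d * pb n d x + ∑ k ∈ Finset.Ico (m+1) d, S k * (pb n k x - pb n (k+1) x)| := by
              rw [Finset.sum_congr rfl hterm, habel]
          _ ≤ |S d * pb n d x| + |∑ k ∈ Finset.Ico (m+1) d, S k * (pb n k x - pb n (k+1) x)| :=
              abs_add_le _ _
          _ ≤ |S d| * pb n d x
              + ∑ k ∈ Finset.Ico (m+1) d, |S k| * |pb n (k+1) x - pb n k x| := by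
              apply _root_.add_le_add
              · rw [abs_mul, abs_of_nonneg (hpbnn d)]
              · calc |∑ k ∈ Finset.Ico (m+1) d, S k * (pb n k x - pb n (k+1) x)|
                    ≤ ∑ k ∈ Finset.Ico (m+1) d, |S k * (pb n k x - pb n (k+1) x)| :=
                      Finset.abs_sum_le_sum_abs _ _
                  _ = ∑ k ∈ Finset.Ico (m+1) d, |S k| * |pb n (k+1) x - pb n k x| := by
                      apply Finset.sum_congr rfl
                      intro k _
                      rw [abs_mul, abs_sub_comm (pb n k x) (pb n (k+1) x)]
          _ ≤ (1/2) * (C*δ) + ∑ k ∈ Finset.Ico (m+1) d, (1/2) * |pb n (k+1) x - pb n k x| := by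
              apply _root_.add_le_add
              · apply mul_le_mul (hSb d) hgd (hpbnn d) (by norm_num)
              · apply Finset.sum_le_sum
                intro k _
                exact mul_le_mul_of_nonneg_right (hSb k) (abs_nonneg _)
          _ = (1/2) * (C*δ) + (1/2) * ∑ k ∈ Finset.Ico (m+1) d, |pb n (k+1) x - pb n k x| := by
              rw [Finset.mul_sum]
          _ ≤ (1/2) * (C*δ) + (1/2) * (2 * (C*δ)) := by
              have h12 : (0:ℝ) ≤ 1/2 := by norm_num
              nlinarith [hTV]
          _ = (3/2) * C * δ := by ring
          _ ≤ 2 * δ := by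
              have := mul_le_mul_of_nonneg_right hCnum (le_of_lt hδ0)
              calc (3/2) * C * δ = (3/2 * C) * δ := by ring
                _ ≤ 2 * δ := this
    -- assemble
    calc |f x - ∑ k ∈ Finset.range (n+1), (q k : ℝ) * pb n k x|
        = |(∑ k ∈ Finset.range (n+1), (f x - F k) * pb n k x)
          + ((∑ k ∈ Finset.range (n+1) \ mid, (F k - (q k:ℝ)) * pb n k x)
             + (∑ k ∈ mid, (F k - (q k:ℝ)) * pb n k x))| := by rw [hsplit]
      _ ≤ |∑ k ∈ Finset.range (n+1), (f x - F k) * pb n k x|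
          + (|∑ k ∈ Finset.range (n+1) \ mid, (F k - (q k:ℝ)) * pb n k x|
             + |∑ k ∈ mid, (F k - (q k:ℝ)) * pb n k x|) := by
          apply le_trans (abs_add_le _ _)
          apply add_le_add_right (abs_add_le _ _)
      _ ≤ 5/4 * ω + (ω + 2 * δ) := by
          apply _root_.add_le_add hT1 (add_le_add hT2e hT2m)
      _ = 9/4 * ω + 2 * δ := by ring
  -- conclude via csInf
  rw [distBernLattice]
  apply csInf_le
  · refine ⟨0, ?_⟩
    rintro e ⟨q', hq'⟩
    exact le_trans (abs_nonneg _) (hq' 0 (Set.mem_Icc.mpr ⟨le_refl 0, zero_le_one⟩))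
  · refine ⟨q, ?_⟩
    intro x hx
    have h := main x hx
    simpa only [pb] using h
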